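/- Let A, B ∈ S(n,ℝ) and L = [[A,0],[0,B]] ∈ S(2n,ℝ). For every j ≥ 1, the set Λ_j(L) = {λ > 0 : det Q_j(λL) = 0} equals { j/√ν : ν is a strictly positive real eigenvalue of AB }. -/

import Mathlib

open Matrix

/-- The standard `2n × 2n` symplectic matrix `J = [[0, -I],[I, 0]]`. -/
noncomputable def Jmat (n : ℕ) : Matrix (Fin n ⊕ Fin n) (Fin n ⊕ Fin n) ℝ :=
  fromBlocks 0 (-1) 1 0

/-- `Q_j(K) = [[-K, jJᵀ],[jJ, -K]]`. -/
noncomputable def Qmat (n j : ℕ) (K : Matrix (Fin n ⊕ Fin n) (Fin n ⊕ Fin n) ℝ) :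
    Matrix ((Fin n ⊕ Fin n) ⊕ (Fin n ⊕ Fin n)) ((Fin n ⊕ Fin n) ⊕ (Fin n ⊕ Fin n)) ℝ :=
  fromBlocks (-K) ((j : ℝ) • (Jmat n)ᵀ) ((j : ℝ) • Jmat n) (-K)

/-- `Λ_j(L) = {λ > 0 : det Q_j(λ L) = 0}`. -/
noncomputable def Lam (n j : ℕ) (L : Matrix (Fin n ⊕ Fin n) (Fin n ⊕ Fin n) ℝ) : Set ℝ :=
  {l : ℝ | 0 < l ∧ (Qmat n j (l • L)).det = 0}

lemma key (n j : ℕ) (A B : Matrix (Fin n) (Fin n) ℝ) (l : ℝ) :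
    (Qmat n j (l • fromBlocks A 0 0 B)).det = 0 ↔
    (l ^ 2 • (A * B) - ((j : ℝ) ^ 2) • 1).det *
      (l ^ 2 • (B * A) - ((j : ℝ) ^ 2) • 1).det = 0 := by
  set c : ℝ := (j : ℝ)
  set L : Matrix (Fin n ⊕ Fin n) (Fin n ⊕ Fin n) ℝ := fromBlocks A 0 0 B with hLdef
  set L' : Matrix (Fin n ⊕ Fin n) (Fin n ⊕ Fin n) ℝ := fromBlocks B 0 0 A with hL'def
  set σ : Matrix (Fin n ⊕ Fin n) (Fin n ⊕ Fin n) ℝ := fromBlocks 0 1 1 0 with hσdef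
  set Jn := Jmat n with hJdef
  have hJT : (Jmat n)ᵀ = -Jn := by
    simp [hJdef, Jmat, fromBlocks_transpose, fromBlocks_neg]
  have hσσ : σ * σ = 1 := by
    simp [hσdef, fromBlocks_multiply, ← fromBlocks_one]
  have hσL : σ * (L * σ) = L' := by
    simp [hσdef, hLdef, hL'def, fromBlocks_multiply]
  have hσJ : σ * (Jn * σ) = -Jn := by
    simp [hσdef, hJdef, Jmat, fromBlocks_multiply, fromBlocks_neg]
  have hJJ : Jn * Jn = -1 := by
    simp [hJdef, Jmat, fromBlocks_multiply, fromBlocks_neg, ← fromBlocks_one]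
  have hLJ : L * Jn = Jn * L' := by
    simp [hLdef, hL'def, hJdef, Jmat, fromBlocks_multiply]
  set Q := Qmat n j (l • L) with hQdef
  set Q' : Matrix ((Fin n ⊕ Fin n) ⊕ (Fin n ⊕ Fin n)) ((Fin n ⊕ Fin n) ⊕ (Fin n ⊕ Fin n)) ℝ :=
    fromBlocks (-(l • L')) (c • Jn) (-(c • Jn)) (-(l • L')) with hQ'def
  set P : Matrix ((Fin n ⊕ Fin n) ⊕ (Fin n ⊕ Fin n)) ((Fin n ⊕ Fin n) ⊕ (Fin n ⊕ Fin n)) ℝ :=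
    fromBlocks σ 0 0 σ with hPdef
  have hQalt : Q = fromBlocks (-(l • L)) (-(c • Jn)) (c • Jn) (-(l • L)) := by
    rw [hQdef, Qmat, hJT]; simp; exact ⟨rfl, rfl⟩
  have hPP : P * P = 1 := by
    simp [hPdef, fromBlocks_multiply, hσσ, ← fromBlocks_one]
  have hPQP : P * Q * P = Q' := by
    rw [hQalt, hPdef, hQ'def, fromBlocks_multiply, fromBlocks_multiply, fromBlocks_inj]
    refine ⟨?_, ?_, ?_, ?_⟩ <;>
      simp [Matrix.smul_mul, Matrix.mul_smul, mul_assoc, hσL, hσJ]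
  have hdetQ' : Q'.det = Q.det := by
    rw [← hPQP, det_mul, det_mul]
    have h : P.det * P.det = 1 := by rw [← det_mul, hPP, det_one]
    linear_combination Q.det * h
  set M : Matrix (Fin n ⊕ Fin n) (Fin n ⊕ Fin n) ℝ := l ^ 2 • (L * L') - c ^ 2 • 1 with hMdef
  have h11 : (-(l • L)) * (-(l • L')) + (-(c • Jn)) * (-(c • Jn)) = M := by
    rw [hMdef]
    simp [Matrix.smul_mul, Matrix.mul_smul, smul_smul, hJJ, sub_eq_add_neg, sq]
  have h22 : (c • Jn) * (c • Jn) + (-(l • L)) * (-(l • L')) = M := by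
    rw [← h11, add_comm]; congr 1; rw [neg_mul_neg]
  have h12 : (-(l • L)) * (c • Jn) + (-(c • Jn)) * (-(l • L')) = 0 := by
    simp [Matrix.smul_mul, Matrix.mul_smul, smul_smul, hLJ, mul_comm]
  have h21 : (c • Jn) * (-(l • L')) + (-(l • L)) * (-(c • Jn)) = 0 := by
    simp [Matrix.smul_mul, Matrix.mul_smul, smul_smul, ← hLJ, mul_comm]
  have hQQ' : Q * Q' = fromBlocks M 0 0 M := by
    rw [hQalt, hQ'def, fromBlocks_multiply, h11, h12, h21, h22]
  have hMblocks : M = fromBlocks (l ^ 2 • (A * B) - c ^ 2 • 1) 0 0 (l ^ 2 • (B * A) - c ^ 2 • 1) := by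
    rw [hMdef, hLdef, hL'def, fromBlocks_multiply, ← fromBlocks_one, sub_eq_add_neg,
      fromBlocks_smul, fromBlocks_smul, fromBlocks_neg, fromBlocks_add]
    simp [sub_eq_add_neg]
  have hMdet : M.det = (l ^ 2 • (A * B) - c ^ 2 • 1).det * (l ^ 2 • (B * A) - c ^ 2 • 1).det := by
    rw [hMblocks, det_fromBlocks_zero₂₁]
  have hsq : Q.det * Q.det = M.det * M.det := by
    have : (Q * Q').det = (fromBlocks M 0 0 M).det := by rw [hQQ']
    rwa [det_mul, hdetQ', det_fromBlocks_zero₂₁] at this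
  constructor
  · intro h
    rw [← hMdet, ← mul_self_eq_zero (a := M.det), ← hsq, h, mul_zero]
  · intro h
    rw [← mul_self_eq_zero (a := Q.det), hsq, hMdet, h, mul_zero]

lemma detcomm {n : ℕ} (A B : Matrix (Fin n) (Fin n) ℝ) {ν : ℝ} (hν : ν ≠ 0) :
    (A * B - ν • 1).det = (B * A - ν • 1).det := by
  have hfact : (-ν) * (-ν⁻¹) = 1 := by field_simp
  have h1 : A * B - ν • (1 : Matrix (Fin n) (Fin n) ℝ) =
      (-ν) • (1 + ((-ν⁻¹) • A) * B) := by
    rw [Matrix.smul_mul, smul_add, smul_smul, hfact, one_smul, neg_smul, ← sub_eq_neg_add]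
  have h2 : B * A - ν • (1 : Matrix (Fin n) (Fin n) ℝ) =
      (-ν) • (1 + B * ((-ν⁻¹) • A)) := by
    rw [Matrix.mul_smul, smul_add, smul_smul, hfact, one_smul, neg_smul, ← sub_eq_neg_add]
  rw [h1, h2, det_smul, det_smul, det_one_add_mul_comm]

lemma scale_det {n : ℕ} (X : Matrix (Fin n) (Fin n) ℝ) {r : ℝ} (s : ℝ) (hr : r ≠ 0) :
    ((r • X - s • (1 : Matrix (Fin n) (Fin n) ℝ)).det = 0 ↔
      (X - (s / r) • (1 : Matrix (Fin n) (Fin n) ℝ)).det = 0) := by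
  have h : r • X - s • (1 : Matrix (Fin n) (Fin n) ℝ) = r • (X - (s / r) • 1) := by
    rw [smul_sub, smul_smul, mul_div_cancel₀ _ hr]
  rw [h, det_smul, mul_eq_zero]
  simp [pow_ne_zero _ hr]

theorem stmt5 (n : ℕ) (A B : Matrix (Fin n) (Fin n) ℝ) (hA : A.IsSymm) (hB : B.IsSymm)
    (j : ℕ) (hj : 1 ≤ j) :
    Lam n j (fromBlocks A 0 0 B) =
      {x : ℝ | ∃ ν : ℝ, 0 < ν ∧ (A * B - ν • 1).det = 0 ∧ x = (j : ℝ) / Real.sqrt ν} := by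
  have hc : (0 : ℝ) < (j : ℝ) := by exact_mod_cast hj
  ext x
  simp only [Lam, Set.mem_setOf_eq]
  constructor
  · rintro ⟨hx, hdet⟩
    rw [key] at hdet
    set ν : ℝ := (j : ℝ) ^ 2 / x ^ 2 with hνdef
    have hν : 0 < ν := by positivity
    have hx2 : x ^ 2 ≠ 0 := by positivity
    refine ⟨ν, hν, ?_, ?_⟩
    · rcases mul_eq_zero.mp hdet with h | h
      · rwa [scale_det _ _ hx2] at h
      · rw [scale_det _ _ hx2] at h
        rw [detcomm A B hν.ne']
        exact h
    · have hsν : Real.sqrt ν = (j : ℝ) / x := by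
        rw [hνdef, ← div_pow, Real.sqrt_sq (by positivity)]
      rw [hsν]; field_simp
  · rintro ⟨ν, hν, hdet, rfl⟩
    have hsν : 0 < Real.sqrt ν := Real.sqrt_pos.mpr hν
    have hx : 0 < (j : ℝ) / Real.sqrt ν := by positivity
    refine ⟨hx, ?_⟩
    rw [key]
    have hx2 : ((j : ℝ) / Real.sqrt ν) ^ 2 ≠ 0 := by positivity
    have hratio : (j : ℝ) ^ 2 / ((j : ℝ) / Real.sqrt ν) ^ 2 = ν := by
      rw [div_pow, Real.sq_sqrt hν.le]
      field_simp
    rw [mul_eq_zero]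
    left
    rw [scale_det _ _ hx2, hratio]
    exact hdet
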